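/- Let s be analytic on B_r(0) with s(0)=0, |s| < 1 on B_r(0), and s'(z) = (1-s(z)⁴)^(1/2). If z ∈ B_r(0) and s(z)⁴ is real, then z is a nonnegative real multiple of s(z); in particular z⁴ is real. -/

import Mathlib

open Complex intervalIntegral Metric Set

noncomputable def lemF (w : ℂ) : ℂ :=
  ∫ t in (0:ℝ)..1, w * (1 - (t:ℂ)^4 * w^4) ^ (-(1:ℂ)/2)

noncomputable def lemF' (w : ℂ) (t : ℝ) : ℂ :=
  (1 - (t:ℂ)^4 * w^4) ^ (-(1:ℂ)/2) + 2*(t:ℂ)^4*w^4 * (1 - (t:ℂ)^4 * w^4) ^ (-(3:ℂ)/2)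

lemma slit_aux {w : ℂ} (hw : ‖w‖ < 1) {t : ℝ} (ht : |t| ≤ 1) :
    (1 - (t:ℂ)^4 * w^4) ∈ Complex.slitPlane ∧
      1 - ‖w‖ ^ 4 ≤ ‖1 - (t:ℂ)^4*w^4‖ := by
  have habs : ‖(t:ℂ)^4 * w^4‖ ≤ ‖w‖ ^ 4 := by
    rw [norm_mul, norm_pow, norm_pow, Complex.norm_real, Real.norm_eq_abs]
    have h1 : |t|^4 ≤ 1 := pow_le_one₀ (abs_nonneg t) ht
    nlinarith [pow_nonneg (norm_nonneg w) 4, pow_nonneg (abs_nonneg t) 4]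
  have hw4 : ‖w‖ ^ 4 < 1 :=
    pow_lt_one₀ (norm_nonneg w) hw (by norm_num)
  have hre : 1 - ‖w‖ ^ 4 ≤ (1 - (t:ℂ)^4*w^4).re := by
    have h2 := Complex.abs_re_le_norm ((t:ℂ)^4*w^4)
    have : (1 - (t:ℂ)^4*w^4).re = 1 - ((t:ℂ)^4*w^4).re := by simp
    rw [this]
    cases' abs_le.1 h2 with hl hr
    linarith
  refine ⟨Complex.mem_slitPlane_iff.2 (Or.inl (by linarith)), ?_⟩
  exact le_trans hre (Complex.re_le_norm _)

lemma deriv_g (c v : ℂ) (h : (1 - c * v^4) ∈ Complex.slitPlane) :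
    HasDerivAt (fun x : ℂ => x * (1 - c * x^4) ^ (-(1:ℂ)/2))
      ((1 - c * v^4) ^ (-(1:ℂ)/2) + 2*c*v^4 * (1 - c*v^4) ^ (-(3:ℂ)/2)) v := by
  have h1 : HasDerivAt (fun x : ℂ => 1 - c * x^4) (-(c * ((4:ℕ) * v^(4-1)))) v := by
    simpa using ((hasDerivAt_pow 4 v).const_mul c).const_sub 1
  have h2 := h1.cpow_const (c := -(1:ℂ)/2) h
  have h3 := (hasDerivAt_id v).mul h2
  refine h3.congr_deriv ?_
  have he : (-(1:ℂ)/2 - 1) = -(3:ℂ)/2 := by norm_num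
  rw [he]
  simp only [id_eq]
  push_cast
  ring

lemma cont_aux {w : ℂ} (hw : ‖w‖ < 1) (e : ℂ) :
    ContinuousOn (fun t : ℝ => (1 - (t:ℂ)^4 * w^4) ^ e) (Set.uIcc 0 1) := by
  intro t ht
  have ht' : |t| ≤ 1 := by
    rw [Set.uIcc_of_le (by norm_num : (0:ℝ) ≤ 1)] at ht
    rw [abs_le]; exact ⟨by linarith [ht.1], ht.2⟩
  have hb : ContinuousAt (fun t : ℝ => 1 - (t:ℂ)^4 * w^4) t := by fun_prop
  exact ((hb.cpow continuousAt_const (slit_aux hw ht').1)).continuousWithinAt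

lemma contOn_integrand {w : ℂ} (hw : ‖w‖ < 1) :
    ContinuousOn (fun t : ℝ => w * (1 - (t:ℂ)^4 * w^4) ^ (-(1:ℂ)/2)) (Set.uIcc 0 1) :=
  continuousOn_const.mul (cont_aux hw _)

lemma contOn_F' {w : ℂ} (hw : ‖w‖ < 1) :
    ContinuousOn (lemF' w) (Set.uIcc 0 1) := by
  refine (cont_aux hw _).add (ContinuousOn.mul ?_ (cont_aux hw _))
  fun_prop

lemma abs_cpow_half {x : ℂ} {δ : ℝ} (hδ : 0 < δ) (hx : δ ≤ ‖x‖) (e : ℝ) (he : e ≤ 0) :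
    ‖x ^ ((e : ℝ) : ℂ)‖ ≤ δ ^ e := by
  rw [Complex.norm_cpow_real]
  exact Real.rpow_le_rpow_of_nonpos hδ hx he

lemma hasDerivAt_lemF {w₀ : ℂ} (hw₀ : ‖w₀‖ < 1) :
    HasDerivAt lemF ((1 - w₀^4) ^ (-(1:ℂ)/2)) w₀ := by
  set ρ : ℝ := (1 + ‖w₀‖)/2 with hρdef
  set ε : ℝ := (1 - ‖w₀‖)/2 with hεdef
  have hεpos : 0 < ε := by
    have := hw₀; simp only [hεdef]; linarith
  have hρlt : ρ < 1 := by simp only [hρdef]; linarith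
  have hρ0 : 0 ≤ ρ := by
    have := norm_nonneg w₀; simp only [hρdef]; linarith
  set δ : ℝ := 1 - ρ^4 with hδdef
  have hδpos : 0 < δ := by
    have : ρ^4 < 1 := pow_lt_one₀ hρ0 hρlt (by norm_num)
    simp only [hδdef]; linarith
  -- membership in the ball gives abs < ρ
  have hball : ∀ w ∈ Metric.ball w₀ ε, ‖w‖ < ρ ∧ ‖w‖ < 1 := by
    intro w hwb
    rw [Metric.mem_ball, dist_eq_norm] at hwb
    have h1 : ‖w‖ ≤ ‖w₀‖ + ‖w - w₀‖ := by
      calc ‖w‖ = ‖w₀ + (w - w₀)‖ := by ring_nf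
        _ ≤ ‖w₀‖ + ‖w - w₀‖ := norm_add_le _ _
    have h2 : ‖w‖ < ρ := by
      simp only [hρdef, hεdef] at *
      calc ‖w‖ ≤ ‖w₀‖ + ‖w - w₀‖ := h1
        _ < ‖w₀‖ + (1 - ‖w₀‖)/2 := by linarith
        _ = (1 + ‖w₀‖)/2 := by ring
    exact ⟨h2, lt_trans h2 hρlt⟩
  -- abs lower bound on base, for w in ball, t with |t| ≤ 1
  have hbase : ∀ w ∈ Metric.ball w₀ ε, ∀ t : ℝ, |t| ≤ 1 →
      δ ≤ ‖1 - (t:ℂ)^4 * w^4‖ := by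
    intro w hwb t ht
    obtain ⟨hwρ, hw1⟩ := hball w hwb
    have h := (slit_aux hw1 ht).2
    have : ‖w‖ ^ 4 ≤ ρ^4 := pow_le_pow_left₀ (norm_nonneg w) hwρ.le 4
    simp only [hδdef]; linarith
  have key := intervalIntegral.hasDerivAt_integral_of_dominated_loc_of_deriv_le
    (F := fun w t => w * (1 - (t:ℂ)^4 * w^4) ^ (-(1:ℂ)/2)) (F' := lemF')
    (a := 0) (b := 1) (x₀ := w₀) (μ := MeasureTheory.volume)
    (bound := fun _ => δ ^ (-(1/2):ℝ) + 2 * δ ^ (-(3/2):ℝ)) (Metric.ball_mem_nhds w₀ hεpos)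
    ?_ ?_ ?_ ?_ ?_ ?_
  · -- assemble: key.2 gives derivative ∫ lemF' w₀ t; rewrite via FTC
    have hFTC : ∫ t in (0:ℝ)..1, lemF' w₀ t = (1 - w₀^4) ^ (-(1:ℂ)/2) := by
      have hψ : ∀ t ∈ Set.uIcc (0:ℝ) 1,
          HasDerivAt (fun t : ℝ => (t:ℂ) * (1 - w₀^4 * (t:ℂ)^4) ^ (-(1:ℂ)/2)) (lemF' w₀ t) t := by
        intro t ht
        have ht' : |t| ≤ 1 := by
          rw [Set.uIcc_of_le (by norm_num : (0:ℝ) ≤ 1)] at ht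
          rw [abs_le]; exact ⟨by linarith [ht.1], ht.2⟩
        have hslit : (1 - w₀^4 * ((t:ℂ))^4) ∈ Complex.slitPlane := by
          rw [mul_comm]; exact (slit_aux hw₀ ht').1
        have hd := (deriv_g (w₀^4) (t:ℂ) hslit).comp_ofReal
        convert hd using 1
        simp only [lemF']
        rw [mul_comm ((t:ℂ)^4) (w₀^4)]
        ring
      rw [intervalIntegral.integral_eq_sub_of_hasDerivAt hψ
        ((contOn_F' hw₀).intervalIntegrable)]
      norm_num
    rw [← hFTC]
    exact key.2
  · -- hF_meas
    filter_upwards [Metric.ball_mem_nhds w₀ hεpos] with w hwb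
    exact ((contOn_integrand (hball w hwb).2).mono Set.uIoc_subset_uIcc).aestronglyMeasurable
      measurableSet_uIoc
  · exact (contOn_integrand hw₀).intervalIntegrable
  · exact ((contOn_F' hw₀).mono Set.uIoc_subset_uIcc).aestronglyMeasurable measurableSet_uIoc
  · -- h_bound
    refine MeasureTheory.ae_of_all _ fun t ht w hwb => ?_
    have ht' : |t| ≤ 1 := by
      rw [Set.uIoc_of_le (by norm_num : (0:ℝ) ≤ 1)] at ht
      rw [abs_le]; exact ⟨by linarith [ht.1.le], ht.2⟩
    have hb := hbase w hwb t ht'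
    obtain ⟨hwρ, hw1⟩ := hball w hwb
    have h1 : ‖(1 - (t:ℂ)^4 * w^4) ^ (-(1:ℂ)/2)‖ ≤ δ ^ (-(1/2):ℝ) := by
      rw [show (-(1:ℂ)/2) = ((-(1/2):ℝ) : ℂ) by norm_num]
      exact abs_cpow_half hδpos hb _ (by norm_num)
    have h2 : ‖(1 - (t:ℂ)^4 * w^4) ^ (-(3:ℂ)/2)‖ ≤ δ ^ (-(3/2):ℝ) := by
      rw [show (-(3:ℂ)/2) = ((-(3/2):ℝ) : ℂ) by norm_num]
      exact abs_cpow_half hδpos hb _ (by norm_num)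
    have h3 : ‖2*(t:ℂ)^4*w^4‖ ≤ 2 := by
      rw [norm_mul, norm_mul, norm_pow, norm_pow, Complex.norm_real, Real.norm_eq_abs, Complex.norm_two]
      have ha : |t|^4 ≤ 1 := pow_le_one₀ (abs_nonneg t) ht'
      have hbb : ‖w‖ ^ 4 ≤ 1 := pow_le_one₀ (norm_nonneg w) hw1.le
      nlinarith [pow_nonneg (abs_nonneg t) 4, pow_nonneg (norm_nonneg w) 4]
    calc ‖lemF' w t‖ ≤ ‖(1 - (t:ℂ)^4 * w^4) ^ (-(1:ℂ)/2)‖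
          + ‖2*(t:ℂ)^4*w^4 * (1 - (t:ℂ)^4 * w^4) ^ (-(3:ℂ)/2)‖ := norm_add_le _ _
      _ ≤ δ ^ (-(1/2):ℝ) + 2 * δ ^ (-(3/2):ℝ) := by
          rw [norm_mul]
          have h4 : ‖2*(t:ℂ)^4*w^4‖ * ‖(1 - (t:ℂ)^4 * w^4) ^ (-(3:ℂ)/2)‖
              ≤ 2 * δ ^ (-(3/2):ℝ) :=
            mul_le_mul h3 h2 (norm_nonneg _) (by norm_num)
          linarith
  · exact intervalIntegrable_const
  · -- h_diff
    refine MeasureTheory.ae_of_all _ fun t ht w hwb => ?_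
    have ht' : |t| ≤ 1 := by
      rw [Set.uIoc_of_le (by norm_num : (0:ℝ) ≤ 1)] at ht
      rw [abs_le]; exact ⟨by linarith [ht.1.le], ht.2⟩
    exact deriv_g ((t:ℂ)^4) w (slit_aux (hball w hwb).2 ht').1

theorem lemniscatic_real_multiple
    (s : ℂ → ℂ)
    (hsA : AnalyticOnNhd ℂ s (Metric.ball (0 : ℂ) ((2 : ℝ) ^ (-(1 : ℝ) / 2))))
    (hs0 : s 0 = 0)
    (hbd : ∀ z ∈ Metric.ball (0 : ℂ) ((2 : ℝ) ^ (-(1 : ℝ) / 2)), ‖s z‖ < 1)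
    (hs : ∀ z ∈ Metric.ball (0 : ℂ) ((2 : ℝ) ^ (-(1 : ℝ) / 2)),
      HasDerivAt s ((1 - s z ^ 4) ^ ((1 : ℂ) / 2)) z) :
    ∀ z ∈ Metric.ball (0 : ℂ) ((2 : ℝ) ^ (-(1 : ℝ) / 2)),
      (s z ^ 4).im = 0 →
      (∃ a : ℝ, 0 ≤ a ∧ z = (a : ℂ) * s z) ∧ (z ^ 4).im = 0 := by
  set r : ℝ := (2 : ℝ) ^ (-(1 : ℝ) / 2) with hrdef
  have hrpos : 0 < r := Real.rpow_pos_of_pos (by norm_num) _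
  have h0mem : (0:ℂ) ∈ Metric.ball (0:ℂ) r := Metric.mem_ball_self hrpos
  -- nonvanishing of 1 - (s z)^4
  have hne : ∀ z ∈ Metric.ball (0:ℂ) r, (1 - s z ^ 4) ≠ 0 := by
    intro z hz
    have := hbd z hz
    intro h
    have h4 : ‖s z ^ 4‖ < 1 := by
      rw [norm_pow]; exact pow_lt_one₀ (norm_nonneg _) this (by norm_num)
    have : s z ^ 4 = 1 := by linear_combination -h
    rw [this] at h4; simp at h4
  -- the composite has derivative zero
  have hG : ∀ z ∈ Metric.ball (0:ℂ) r,
      HasDerivAt (fun z => lemF (s z) - z) 0 z := by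
    intro z hz
    have h1 : HasDerivAt (fun z => lemF (s z))
        ((1 - s z ^ 4) ^ (-(1:ℂ)/2) * ((1 - s z ^ 4) ^ ((1:ℂ)/2))) z :=
      (hasDerivAt_lemF (hbd z hz)).comp z (hs z hz)
    have h2 : (1 - s z ^ 4) ^ (-(1:ℂ)/2) * ((1 - s z ^ 4) ^ ((1:ℂ)/2)) = 1 := by
      rw [← Complex.cpow_add _ _ (hne z hz)]
      norm_num
    rw [h2] at h1
    exact (h1.sub (hasDerivAt_id' z)).congr_deriv (sub_self _)
  -- constancy on the convex ball
  have hconst : ∀ z ∈ Metric.ball (0:ℂ) r, lemF (s z) = z := by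
    intro z hz
    have hF0 : lemF (s 0) = 0 := by
      rw [hs0]; simp [lemF]
    have hfd : ∀ x ∈ Metric.ball (0:ℂ) r,
        HasFDerivAt (fun z => lemF (s z) - z) (0 : ℂ →L[ℂ] ℂ) x := by
      intro x hx
      have h := (hG x hx).hasFDerivAt
      rwa [show ContinuousLinearMap.toSpanSingleton ℂ (0:ℂ) = 0 by ext; simp] at h
    have hdiff : DifferentiableOn ℂ (fun z => lemF (s z) - z) (Metric.ball (0:ℂ) r) :=
      fun x hx => (hfd x hx).differentiableAt.differentiableWithinAt
    have hzero : ∀ x ∈ Metric.ball (0:ℂ) r,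
        fderivWithin ℂ (fun z => lemF (s z) - z) (Metric.ball (0:ℂ) r) x = 0 := by
      intro x hx
      rw [fderivWithin_of_isOpen Metric.isOpen_ball hx]
      exact (hfd x hx).fderiv
    have hsub := (convex_ball (0:ℂ) r).is_const_of_fderivWithin_eq_zero hdiff hzero hz h0mem
    rw [hF0] at hsub
    linear_combination hsub
  -- final computation
  intro z hz him
  set w := s z with hwdef
  have hw1 : ‖w‖ < 1 := hbd z hz
  set c : ℝ := (w ^ 4).re with hcdef
  have hc : (w ^ 4 : ℂ) = (c : ℂ) := by
    apply Complex.ext <;> simp [him, hcdef]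
  have hcabs : |c| < 1 := by
    have : ‖w^4‖ < 1 := by
      rw [norm_pow]; exact pow_lt_one₀ (norm_nonneg _) hw1 (by norm_num)
    calc |c| = ‖(c:ℂ)‖ := by rw [Complex.norm_real, Real.norm_eq_abs]
      _ = ‖w^4‖ := by rw [hc]
      _ < 1 := this
  set a : ℝ := ∫ t in (0:ℝ)..1, (1 - t^4*c) ^ (-(1/2):ℝ) with hadef
  have hbasepos : ∀ t : ℝ, t ∈ Set.uIcc (0:ℝ) 1 → 0 < 1 - t^4*c := by
    intro t ht
    rw [Set.uIcc_of_le (by norm_num : (0:ℝ) ≤ 1)] at ht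
    have h1 : t^4 ≤ 1 := pow_le_one₀ ht.1 ht.2
    have h2 : 0 ≤ t^4 := pow_nonneg ht.1 4
    cases' abs_lt.1 hcabs with hl hr
    nlinarith
  have ha0 : 0 ≤ a := by
    apply intervalIntegral.integral_nonneg (by norm_num : (0:ℝ) ≤ 1)
    intro t ht
    exact Real.rpow_nonneg (by
      have := hbasepos t (by rwa [Set.uIcc_of_le (by norm_num : (0:ℝ) ≤ 1)]); linarith) _
  have hFw : lemF w = w * (a : ℂ) := by
    rw [lemF]
    rw [show (∫ t in (0:ℝ)..1, w * (1 - (t:ℂ)^4 * w^4) ^ (-(1:ℂ)/2))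
        = ∫ t in (0:ℝ)..1, w * ((((1 - t^4*c) ^ (-(1/2):ℝ) : ℝ)) : ℂ) from ?_]
    · rw [intervalIntegral.integral_const_mul, intervalIntegral.integral_ofReal]
    · apply intervalIntegral.integral_congr
      intro t ht
      have hpos := hbasepos t ht
      show w * (1 - (t:ℂ)^4 * w^4) ^ (-(1:ℂ)/2) = w * ((((1 - t^4*c) ^ (-(1/2):ℝ) : ℝ)) : ℂ)
      have hbase : (1 - (t:ℂ)^4 * w^4) = ((1 - t^4*c : ℝ) : ℂ) := by
        rw [hc]; push_cast; ring
      rw [hbase, Complex.ofReal_cpow hpos.le]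
      norm_num
  have hz_eq : z = (a : ℂ) * w := by
    rw [← hconst z hz, hFw]; ring
  refine ⟨⟨a, ha0, hz_eq⟩, ?_⟩
  have : z ^ 4 = ((a^4 * c : ℝ) : ℂ) := by
    rw [hz_eq, mul_pow, hc]; push_cast; ring
  rw [this, Complex.ofReal_im]
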